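/- arXiv:1211.4483 — 2 statements merged into one kernel-verified Lean document; each statement's English description precedes it below -/
import Mathlib

section
/- Let 0 < d < 1/2. Then the function λ ↦ |1 - e^{-iλ}|^{-2d} is integrable on [-π,π], and (1/(2π)) ∫_{-π}^{π} |1 - e^{-iλ}|^{-2d} dλ = Γ(1-2d) / Γ(1-d)², where Γ is the real Gamma function. -/
open MeasureTheory Real Complex


lemma abs_one_sub_exp (x : ℝ) :
    ‖1 - Complex.exp (-(x:ℂ) * Complex.I)‖ = 2 * |Real.sin (x/2)| := by
  have h : (1 : ℂ) - Complex.exp (-(x:ℂ) * Complex.I)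
      = ((1 - Real.cos x : ℝ) : ℂ) + ((Real.sin x : ℝ) : ℂ) * Complex.I := by
    rw [show (-(x:ℂ) * Complex.I) = ((-x : ℝ) : ℂ) * Complex.I by push_cast; ring,
      Complex.exp_mul_I]
    simp [← Complex.ofReal_cos, ← Complex.ofReal_sin, Real.cos_neg, Real.sin_neg]
    ring
  rw [h, Complex.norm_add_mul_I]
  have h2 : (1 - Real.cos x) ^ 2 + Real.sin x ^ 2 = (2 * |Real.sin (x/2)|) ^ 2 := by
    have h3 := Real.cos_two_mul (x/2)
    rw [show (2:ℝ) * (x/2) = x by ring] at h3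
    have hpy := Real.sin_sq_add_cos_sq x
    have hpy2 := Real.sin_sq_add_cos_sq (x/2)
    rw [mul_pow, _root_.sq_abs]
    nlinarith
  rw [h2, Real.sqrt_sq (by positivity)]

lemma real_beta (u v : ℝ) (hu : 0 < u) (hv : 0 < v) :
    ∫ t in (0:ℝ)..1, t ^ (u - 1) * (1 - t) ^ (v - 1)
      = Real.Gamma u * Real.Gamma v / Real.Gamma (u + v) := by
  have hc : Complex.Gamma u * Complex.Gamma v
      = Complex.Gamma (u + v) * Complex.betaIntegral u v :=
    Complex.Gamma_mul_Gamma_eq_betaIntegral (by simpa using hu) (by simpa using hv)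
  have hbeta : Complex.betaIntegral u v
      = ((∫ t in (0:ℝ)..1, t ^ (u - 1) * (1 - t) ^ (v - 1) : ℝ) : ℂ) := by
    rw [Complex.betaIntegral, ← intervalIntegral.integral_ofReal]
    refine intervalIntegral.integral_congr fun t ht => ?_
    rw [Set.uIcc_of_le (by norm_num : (0:ℝ) ≤ 1)] at ht
    have h1 : ((t:ℂ)) ^ ((u:ℂ) - 1) = ((t ^ (u - 1) : ℝ) : ℂ) := by
      rw [Complex.ofReal_cpow ht.1]
      norm_cast
    have h2 : ((1:ℂ) - t) ^ ((v:ℂ) - 1) = (((1 - t) ^ (v - 1) : ℝ) : ℂ) := by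
      rw [show ((1:ℂ) - t) = (((1 - t : ℝ)):ℂ) by push_cast; ring,
        Complex.ofReal_cpow (by linarith [ht.2])]
      norm_cast
    rw [h1, h2]
    norm_cast
  have hG : Complex.Gamma (u + v) ≠ 0 := by
    rw [show ((u:ℂ) + v) = ((u + v : ℝ) : ℂ) by push_cast; ring, Complex.Gamma_ofReal]
    exact_mod_cast (Real.Gamma_pos_of_pos (by linarith)).ne'
  have : ((Real.Gamma u * Real.Gamma v : ℝ) : ℂ)
      = ((Real.Gamma (u + v) : ℝ) : ℂ) * ((∫ t in (0:ℝ)..1, t ^ (u - 1) * (1 - t) ^ (v - 1) : ℝ) : ℂ) := by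
    push_cast [← Complex.Gamma_ofReal] at hc ⊢
    rw [hc, hbeta]
  have h2 : Real.Gamma u * Real.Gamma v
      = Real.Gamma (u + v) * ∫ t in (0:ℝ)..1, t ^ (u - 1) * (1 - t) ^ (v - 1) := by
    exact_mod_cast this
  have hGr : Real.Gamma (u + v) ≠ 0 := (Real.Gamma_pos_of_pos (by linarith)).ne'
  field_simp [h2]
  rw [h2]; ring


lemma real_beta_integrable (u v : ℝ) (hu : 0 < u) (hv : 0 < v) :
    IntegrableOn (fun t : ℝ => t ^ (u - 1) * (1 - t) ^ (v - 1)) (Set.Ioo 0 1) := by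
  have h := Complex.betaIntegral_convergent (u := u) (v := v) (by simpa using hu) (by simpa using hv)
  have h2 : IntegrableOn (fun x : ℝ => (x:ℂ) ^ ((u:ℂ) - 1) * ((1:ℂ) - x) ^ ((v:ℂ) - 1))
      (Set.Ioo 0 1) :=
    ((intervalIntegrable_iff_integrableOn_Ioc_of_le (by norm_num)).1 h).mono_set
      Set.Ioo_subset_Ioc_self
  refine IntegrableOn.congr_fun h2.re (fun t ht => ?_) measurableSet_Ioo
  have h1 : ((t:ℂ)) ^ ((u:ℂ) - 1) = ((t ^ (u - 1) : ℝ) : ℂ) := by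
    rw [Complex.ofReal_cpow ht.1.le]; norm_cast
  have h2' : ((1:ℂ) - t) ^ ((v:ℂ) - 1) = (((1 - t) ^ (v - 1) : ℝ) : ℂ) := by
    rw [show ((1:ℂ) - t) = (((1 - t : ℝ)):ℂ) by push_cast; ring,
      Complex.ofReal_cpow (by linarith [ht.2])]
    norm_cast
  simp only [RCLike.re_to_complex, h1, h2', ← Complex.ofReal_mul, Complex.ofReal_re]

lemma sin_rpow_int (d : ℝ) (hd0 : 0 < d) (hd1 : d < 1/2) :
    IntegrableOn (fun θ : ℝ => Real.sin θ ^ (-(2*d))) (Set.Ioo 0 (π/2)) ∧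
    ∫ θ in Set.Ioo 0 (π/2), Real.sin θ ^ (-(2*d))
      = Real.Gamma (1/2 - d) * Real.Gamma (1/2) / Real.Gamma (1 - d) / 2 := by
  set u : ℝ := 1/2 - d with hu_def
  have hu : 0 < u := by simp only [hu_def]; linarith
  set f : ℝ → ℝ := fun t => t ^ (u - 1) * (1 - t) ^ ((1:ℝ)/2 - 1) with hf_def
  set φ : ℝ → ℝ := fun θ => Real.sin θ ^ 2 with hφ_def
  have hderiv : ∀ x ∈ Set.Ioo (0:ℝ) (π/2),
      HasDerivWithinAt φ (2 * Real.sin x * Real.cos x) (Set.Ioo 0 (π/2)) x := by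
    intro x _
    have := ((Real.hasDerivAt_sin x).fun_pow 2).hasDerivWithinAt (s := Set.Ioo (0:ℝ) (π/2))
    simpa [mul_comm, mul_assoc, mul_left_comm] using this
  have hinj : Set.InjOn φ (Set.Ioo 0 (π/2)) := by
    intro a ha b hb hab
    have hsa : 0 ≤ Real.sin a := Real.sin_nonneg_of_nonneg_of_le_pi ha.1.le
      (by linarith [ha.2, Real.pi_pos])
    have hsb : 0 ≤ Real.sin b := Real.sin_nonneg_of_nonneg_of_le_pi hb.1.le
      (by linarith [hb.2, Real.pi_pos])
    have hs : Real.sin a = Real.sin b := by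
      simp only [hφ_def] at hab; nlinarith
    exact Real.injOn_sin ⟨by linarith [ha.1, Real.pi_pos], ha.2.le⟩
      ⟨by linarith [hb.1, Real.pi_pos], hb.2.le⟩ hs
  have himg : φ '' Set.Ioo 0 (π/2) = Set.Ioo 0 1 := by
    ext t
    constructor
    · rintro ⟨θ, hθ, rfl⟩
      have hs : 0 < Real.sin θ := Real.sin_pos_of_pos_of_lt_pi hθ.1
        (by linarith [hθ.2, Real.pi_pos])
      have hc : 0 < Real.cos θ := Real.cos_pos_of_mem_Ioo
        ⟨by linarith [hθ.1, Real.pi_pos], hθ.2⟩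
      have hpy := Real.sin_sq_add_cos_sq θ
      constructor
      · show (0:ℝ) < Real.sin θ ^ 2
        exact pow_pos hs 2
      · show Real.sin θ ^ 2 < 1
        nlinarith
    · intro ht
      have hst : Real.sqrt t ≤ 1 := by
        rw [show (1:ℝ) = Real.sqrt 1 by simp]
        exact Real.sqrt_le_sqrt ht.2.le
      have hst' : Real.sqrt t < 1 := by
        rw [show (1:ℝ) = Real.sqrt 1 by simp]
        exact (Real.sqrt_lt_sqrt ht.1.le ht.2)
      refine ⟨Real.arcsin (Real.sqrt t), ⟨?_, ?_⟩, ?_⟩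
      · exact Real.arcsin_pos.2 (Real.sqrt_pos.2 ht.1)
      · exact Real.arcsin_lt_pi_div_two.2 hst'
      · simp only [hφ_def]
        rw [Real.sin_arcsin (by linarith [Real.sqrt_nonneg t]) hst, Real.sq_sqrt ht.1.le]
  have hbint := real_beta_integrable u (1/2) hu (by norm_num)
  have key := integral_image_eq_integral_abs_deriv_smul measurableSet_Ioo hderiv hinj f
  have keyi := integrableOn_image_iff_integrableOn_abs_deriv_smul measurableSet_Ioo hderiv hinj f
  rw [himg] at key keyi
  have heq : Set.EqOn (fun x => |2 * Real.sin x * Real.cos x| • f (φ x))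
      (fun x => 2 * Real.sin x ^ (-(2*d))) (Set.Ioo 0 (π/2)) := by
    intro x hx
    have hs : 0 < Real.sin x := Real.sin_pos_of_pos_of_lt_pi hx.1
      (by linarith [hx.2, Real.pi_pos])
    have hc : 0 < Real.cos x := Real.cos_pos_of_mem_Ioo
      ⟨by linarith [hx.1, Real.pi_pos], hx.2⟩
    simp only [hf_def, hφ_def, smul_eq_mul]
    rw [abs_of_pos (by positivity)]
    have e1 : (Real.sin x ^ 2 : ℝ) ^ (u - 1) = Real.sin x ^ (-(2*d) - 1) := by
      rw [← Real.rpow_natCast (Real.sin x) 2, ← Real.rpow_mul hs.le]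
      norm_num [hu_def]
      ring_nf
    have e2 : ((1:ℝ) - Real.sin x ^ 2) ^ ((1:ℝ)/2 - 1) = (Real.cos x)⁻¹ := by
      rw [← Real.cos_sq' x, ← Real.rpow_natCast (Real.cos x) 2, ← Real.rpow_mul hc.le]
      norm_num
      exact Real.rpow_neg_one _
    rw [e1, e2]
    have e3 : Real.sin x * Real.sin x ^ (-(2*d) - 1) = Real.sin x ^ (-(2*d)) := by
      nth_rewrite 1 [← Real.rpow_one (Real.sin x)]
      rw [← Real.rpow_add hs]
      norm_num
    field_simp
    rw [← e3]
  rw [setIntegral_congr_fun measurableSet_Ioo heq] at key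
  have hint2 : IntegrableOn (fun x => 2 * Real.sin x ^ (-(2*d))) (Set.Ioo 0 (π/2)) := by
    exact IntegrableOn.congr_fun (keyi.1 hbint) heq measurableSet_Ioo
  constructor
  · exact IntegrableOn.congr_fun (hint2.const_mul (1/2)) (fun x _ => by ring) measurableSet_Ioo
  · have hbval : ∫ t in Set.Ioo (0:ℝ) 1, f t
        = Real.Gamma u * Real.Gamma (1/2) / Real.Gamma (u + 1/2) := by
      rw [← integral_Ioc_eq_integral_Ioo, ← intervalIntegral.integral_of_le (by norm_num : (0:ℝ) ≤ 1)]
      exact real_beta u (1/2) hu (by norm_num)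
    rw [hbval] at key
    rw [integral_const_mul] at key
    have : ∫ θ in Set.Ioo 0 (π/2), Real.sin θ ^ (-(2*d))
        = Real.Gamma u * Real.Gamma (1/2) / Real.Gamma (u + 1/2) / 2 := by linarith
    rw [this, hu_def]
    norm_num
    ring_nf


/-- For `0 < d < 1/2`, `λ ↦ |1 - e^{-iλ}|^{-2d}` is integrable on `[-π, π]` and
`(1/(2π)) ∫_{-π}^{π} |1 - e^{-iλ}|^{-2d} dλ = Γ(1-2d)/Γ(1-d)²`. -/
theorem fractional_noise_variance (d : ℝ) (hd0 : 0 < d) (hd1 : d < 1/2) :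
    IntegrableOn
      (fun lam : ℝ => ‖1 - Complex.exp (-(lam : ℂ) * Complex.I)‖ ^ (-(2 * d)))
      (Set.Icc (-Real.pi) Real.pi) ∧
    (1 / (2 * Real.pi)) *
      ∫ lam in (-Real.pi)..Real.pi,
        ‖1 - Complex.exp (-(lam : ℂ) * Complex.I)‖ ^ (-(2 * d))
    = Real.Gamma (1 - 2 * d) / Real.Gamma (1 - d) ^ 2 := by
  have hπ := Real.pi_pos
  set G : ℝ → ℝ := fun lam => (2 * |Real.sin (lam/2)|) ^ (-(2*d)) with hG_def
  have FeqG : ∀ x : ℝ, ‖1 - Complex.exp (-(x:ℂ) * Complex.I)‖ ^ (-(2*d)) = G x := by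
    intro x; rw [abs_one_sub_exp]
  have hGeven : ∀ x : ℝ, G (-x) = G x := by
    intro x
    simp only [hG_def]
    rw [show -x/2 = -(x/2) by ring, Real.sin_neg, abs_neg]
  obtain ⟨hsin_int, hsin_val⟩ := sin_rpow_int d hd0 hd1
  -- G(2θ) = 2^(-2d) * sin θ ^ (-2d) on [0, π/2]
  have hGEq : ∀ θ ∈ Set.Icc (0:ℝ) (π/2), G (2*θ) = 2^(-(2*d)) * Real.sin θ ^ (-(2*d)) := by
    intro θ hθ
    have hs : 0 ≤ Real.sin θ := Real.sin_nonneg_of_nonneg_of_le_pi hθ.1 (by linarith [hθ.2])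
    simp only [hG_def]
    rw [show 2*θ/2 = θ by ring, _root_.abs_of_nonneg hs,
      Real.mul_rpow (by norm_num) hs]
  have hG2 : IntegrableOn (fun θ => G (2*θ)) (Set.Ioo 0 (π/2)) := by
    refine IntegrableOn.congr_fun (hsin_int.const_mul (2^(-(2*d))))
      (fun θ hθ => (hGEq θ ⟨hθ.1.le, hθ.2.le⟩).symm) measurableSet_Ioo
  -- transfer to Ioo 0 π via x ↦ 2x
  have himg2 : (fun x : ℝ => 2*x) '' Set.Ioo 0 (π/2) = Set.Ioo 0 π := by
    ext t
    constructor
    · rintro ⟨x, hx, rfl⟩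
      simp only [Set.mem_Ioo] at *
      constructor <;> linarith
    · intro ht
      exact ⟨t/2, ⟨by linarith [ht.1], by linarith [ht.2]⟩, by ring⟩
  have hderiv2 : ∀ x ∈ Set.Ioo (0:ℝ) (π/2),
      HasDerivWithinAt (fun x : ℝ => 2*x) 2 (Set.Ioo 0 (π/2)) x := by
    intro x _
    simpa using ((hasDerivAt_id x).const_mul (2:ℝ)).hasDerivWithinAt
  have hinj2 : Set.InjOn (fun x : ℝ => 2*x) (Set.Ioo 0 (π/2)) :=
    fun a _ b _ h => by dsimp at h; linarith
  have hGpos : IntegrableOn G (Set.Ioo 0 π) := by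
    rw [← himg2, integrableOn_image_iff_integrableOn_abs_deriv_smul measurableSet_Ioo hderiv2 hinj2]
    refine IntegrableOn.congr_fun (hG2.const_mul 2) (fun x _ => ?_) measurableSet_Ioo
    simp [abs_two, smul_eq_mul]
  have hGposIcc : IntegrableOn G (Set.Icc 0 π) :=
    (integrableOn_Icc_iff_integrableOn_Ioo).2 hGpos
  -- negative side
  have himgneg : (fun x : ℝ => -x) '' Set.Icc 0 π = Set.Icc (-π) 0 := by
    ext t
    constructor
    · rintro ⟨x, hx, rfl⟩
      simp only [Set.mem_Icc] at *
      constructor <;> linarith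
    · intro ht
      exact ⟨-t, ⟨by linarith [ht.2], by linarith [ht.1]⟩, by ring⟩
  have hGnegIcc : IntegrableOn G (Set.Icc (-π) 0) := by
    rw [← himgneg, integrableOn_image_iff_integrableOn_abs_deriv_smul measurableSet_Icc
      (fun x _ => (hasDerivAt_neg x).hasDerivWithinAt) (neg_injective.injOn)]
    refine IntegrableOn.congr_fun hGposIcc (fun x _ => ?_) measurableSet_Icc
    simp [hGeven x]
  have hGIcc : IntegrableOn G (Set.Icc (-π) π) := by
    rw [← Set.Icc_union_Icc_eq_Icc (by linarith : -π ≤ (0:ℝ)) hπ.le]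
    exact hGnegIcc.union hGposIcc
  constructor
  · exact IntegrableOn.congr_fun hGIcc (fun x _ => (FeqG x).symm) measurableSet_Icc
  · -- value of the integral
    have hint_congr : ∫ lam in (-π)..π,
        ‖1 - Complex.exp (-(lam : ℂ) * Complex.I)‖ ^ (-(2 * d))
        = ∫ lam in (-π)..π, G lam :=
      intervalIntegral.integral_congr (fun x _ => FeqG x)
    have hii1 : IntervalIntegrable G volume (-π) 0 := by
      rw [intervalIntegrable_iff_integrableOn_Icc_of_le (by linarith)]
      exact hGnegIcc
    have hii2 : IntervalIntegrable G volume 0 π := by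
      rw [intervalIntegrable_iff_integrableOn_Icc_of_le hπ.le]
      exact hGposIcc
    have hsplit : ∫ lam in (-π)..π, G lam = (∫ lam in (-π)..0, G lam) + ∫ lam in (0:ℝ)..π, G lam :=
      (intervalIntegral.integral_add_adjacent_intervals hii1 hii2).symm
    have hnegpart : ∫ lam in (-π)..0, G lam = ∫ lam in (0:ℝ)..π, G lam := by
      have h1 : ∫ x in (0:ℝ)..π, G (-x) = ∫ x in (-π)..(-0:ℝ), G x :=
        intervalIntegral.integral_comp_neg G
      rw [neg_zero] at h1
      rw [← h1]
      exact intervalIntegral.integral_congr (fun x _ => (hGeven x).symm) |>.symm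
    -- half-interval substitution
    have hhalf : (∫ x in (0:ℝ)..(π/2), G (2*x)) = ((2:ℝ))⁻¹ • ∫ x in (0:ℝ)..π, G x := by
      have := intervalIntegral.integral_comp_mul_left (a := (0:ℝ)) (b := π/2) G
        (two_ne_zero)
      rw [mul_zero, show 2*(π/2) = π by ring] at this
      exact this
    have hvalhalf : (∫ x in (0:ℝ)..(π/2), G (2*x))
        = 2^(-(2*d)) * ∫ θ in Set.Ioo 0 (π/2), Real.sin θ ^ (-(2*d)) := by
      rw [intervalIntegral.integral_congr (g := fun θ => 2^(-(2*d)) * Real.sin θ ^ (-(2*d)))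
        (fun x hx => hGEq x (by rwa [Set.uIcc_of_le (by positivity)] at hx)),
        intervalIntegral.integral_of_le (by positivity), integral_Ioc_eq_integral_Ioo,
        integral_const_mul]
    have hfull : ∫ lam in (-π)..π, G lam
        = 2 * (2 * (2^(-(2*d)) * (Real.Gamma (1/2 - d) * Real.Gamma (1/2)
            / Real.Gamma (1 - d) / 2))) := by
      rw [hsplit, hnegpart, ← hsin_val, ← hvalhalf, hhalf]
      simp only [smul_eq_mul]
      ring
    rw [hint_congr, hfull]
    -- final arithmetic
    have hdup := Real.Gamma_mul_Gamma_add_half (1/2 - d)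
    rw [show (1:ℝ)/2 - d + 1/2 = 1 - d by ring, show 2*((1:ℝ)/2 - d) = 1 - 2*d by ring,
      show (1:ℝ) - (1 - 2*d) = 2*d by ring] at hdup
    have hB : 0 < Real.Gamma (1 - d) := Real.Gamma_pos_of_pos (by linarith)
    have hp : (0:ℝ) < 2 ^ (2*d) := Real.rpow_pos_of_pos two_pos _
    have hs2 : Real.sqrt π * Real.sqrt π = π := Real.mul_self_sqrt hπ.le
    have hneg2 : (2:ℝ) ^ (-(2*d)) = ((2:ℝ)^(2*d))⁻¹ := Real.rpow_neg (by norm_num) _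
    rw [Real.Gamma_one_half_eq, hneg2]
    set A := Real.Gamma (1 - 2*d) with hA
    set B := Real.Gamma (1 - d) with hBdef
    set C := Real.Gamma (1/2 - d) with hC
    set p := (2:ℝ) ^ (2*d) with hpdef
    set s := Real.sqrt π with hsdef
    clear_value A B C p s
    field_simp
    linear_combination s * hdup + (A * p) * hs2
end

section
/- Let h : [-π,π] → ℝ be integrable and even, and suppose there are constants m ≤ M such that m ≤ 2π h(λ) ≤ M for almost every λ ∈ [-π,π]. Then for every x ∈ ℝⁿ, m ‖x‖² ≤ xᵀ T_n(h) x ≤ M ‖x‖², where T_n(h) is the n×n Toeplitz matrix with entries γ_h(l-m). In particular all eigenvalues of T_n(h) lie in [m, M]. -/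
open MeasureTheory Real Complex BigOperators Matrix

private lemma toeplitz_orth (j : ℤ) :
    (∫ lam in (-Real.pi)..Real.pi, Complex.exp (Complex.I * (j : ℂ) * (lam : ℂ)))
      = if j = 0 then (2 * Real.pi : ℂ) else 0 := by
  split_ifs with hj
  · subst hj
    simp only [Int.cast_zero, mul_zero, zero_mul, Complex.exp_zero]
    rw [intervalIntegral.integral_const]
    ring_nf
    simp [Complex.real_smul]
  · have hc : (Complex.I * (j : ℂ)) ≠ 0 := by
      simp [Complex.I_ne_zero, hj]
    have key := integral_exp_mul_complex (a := -Real.pi) (b := Real.pi) hc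
    have heq : Complex.exp (Complex.I * (j:ℂ) * (Real.pi : ℂ))
        = Complex.exp (Complex.I * (j:ℂ) * ((-Real.pi : ℝ) : ℂ)) := by
      have h2 : Complex.I * (j:ℂ) * (Real.pi : ℂ)
          = Complex.I * (j:ℂ) * ((-Real.pi : ℝ):ℂ) + (j:ℂ) * (2 * (Real.pi:ℂ) * Complex.I) := by
        push_cast; ring
      rw [h2, Complex.exp_add, Complex.exp_int_mul_two_pi_mul_I, mul_one]
    calc (∫ lam in (-Real.pi)..Real.pi, Complex.exp (Complex.I * (j : ℂ) * (lam : ℂ)))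
        = (Complex.exp (Complex.I * (j:ℂ) * (Real.pi:ℂ))
            - Complex.exp (Complex.I * (j:ℂ) * ((-Real.pi:ℝ):ℂ))) / (Complex.I * (j:ℂ)) := by
          simpa [mul_assoc] using key
      _ = 0 := by rw [heq]; simp

private noncomputable def te (j : ℤ) (lam : ℝ) : ℂ :=
  Complex.exp (Complex.I * (j : ℂ) * (lam : ℂ))

private noncomputable def tP (n : ℕ) (x : Fin n → ℝ) (lam : ℝ) : ℂ :=
  ∑ j : Fin n, (x j : ℂ) * te (j : ℤ) lam

private lemma te_cont (j : ℤ) : Continuous (te j) := by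
  unfold te
  exact Complex.continuous_exp.comp (by continuity)

private lemma te_norm (j : ℤ) (lam : ℝ) : ‖te j lam‖ = 1 := by
  have : (Complex.I * (j:ℂ) * (lam:ℂ)).re = 0 := by simp
  simp [te, Complex.norm_exp, this]

private lemma te_mul (a b : ℤ) (lam : ℝ) : te a lam * te b lam = te (a + b) lam := by
  unfold te
  rw [← Complex.exp_add]
  congr 1
  push_cast
  ring

private lemma tP_cont (n : ℕ) (x : Fin n → ℝ) : Continuous (tP n x) := by
  unfold tP
  exact continuous_finset_sum _ fun j _ => continuous_const.mul (te_cont _)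

private lemma conj_tP (n : ℕ) (x : Fin n → ℝ) (lam : ℝ) :
    (starRingEnd ℂ) (tP n x lam) = ∑ k : Fin n, (x k : ℂ) * te (-(k:ℤ)) lam := by
  unfold tP
  rw [map_sum]
  refine Finset.sum_congr rfl fun k _ => ?_
  rw [_root_.map_mul, Complex.conj_ofReal]
  congr 1
  unfold te
  rw [← Complex.exp_conj]
  congr 1
  simp only [_root_.map_mul, Complex.conj_I, Complex.conj_ofReal, map_intCast]
  push_cast
  ring

private lemma tPP (n : ℕ) (x : Fin n → ℝ) (lam : ℝ) :
    tP n x lam * (starRingEnd ℂ) (tP n x lam)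
      = ∑ l : Fin n, ∑ k : Fin n, ((x l * x k : ℝ) : ℂ) * te ((l:ℤ) - (k:ℤ)) lam := by
  rw [conj_tP]
  unfold tP
  rw [Finset.sum_mul_sum]
  refine Finset.sum_congr rfl fun l _ => Finset.sum_congr rfl fun k _ => ?_
  have h1 : (x l : ℂ) * te (l:ℤ) lam * ((x k : ℂ) * te (-(k:ℤ)) lam)
      = ((x l * x k : ℝ) : ℂ) * (te (l:ℤ) lam * te (-(k:ℤ)) lam) := by push_cast; ring
  rw [h1, te_mul, ← sub_eq_add_neg]

private lemma te_intInt (j : ℤ) (a b : ℝ) : IntervalIntegrable (te j) volume a b :=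
  (te_cont j).intervalIntegrable a b

private lemma intInt_sum {ι : Type*} (s : Finset ι) (f : ι → ℝ → ℂ) (a b : ℝ)
    (h : ∀ i ∈ s, IntervalIntegrable (f i) volume a b) :
    IntervalIntegrable (fun lam => ∑ i ∈ s, f i lam) volume a b := by
  have heq : (fun lam => ∑ i ∈ s, f i lam) = ∑ i ∈ s, f i := by
    funext lam; simp
  rw [heq]
  exact IntervalIntegrable.sum s h

set_option maxHeartbeats 1000000 in
private lemma toeplitz_parseval (n : ℕ) (x : Fin n → ℝ) :
    (∫ lam in (-Real.pi)..Real.pi, tP n x lam * (starRingEnd ℂ) (tP n x lam))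
      = ((2 * Real.pi * ∑ i, x i ^ 2 : ℝ) : ℂ) := by
  rw [intervalIntegral.integral_congr (fun lam _ => tPP n x lam)]
  have hswap : (∫ lam in (-Real.pi)..Real.pi,
        ∑ l : Fin n, ∑ k : Fin n, ((x l * x k : ℝ) : ℂ) * te ((l:ℤ) - (k:ℤ)) lam)
      = ∑ l : Fin n, ∫ lam in (-Real.pi)..Real.pi,
          ∑ k : Fin n, ((x l * x k : ℝ) : ℂ) * te ((l:ℤ) - (k:ℤ)) lam :=
    intervalIntegral.integral_finset_sum
      (f := fun (l : Fin n) (lam : ℝ) =>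
        ∑ k : Fin n, ((x l * x k : ℝ) : ℂ) * te ((l:ℤ) - (k:ℤ)) lam)
      (fun l _ => intInt_sum _ _ _ _ fun k _ => (te_intInt _ _ _).const_mul _)
  rw [hswap]
  have hinner : ∀ l : Fin n,
      (∫ lam in (-Real.pi)..Real.pi,
        ∑ k : Fin n, ((x l * x k : ℝ) : ℂ) * te ((l:ℤ) - (k:ℤ)) lam)
      = ((x l * x l : ℝ) : ℂ) * (2 * Real.pi : ℂ) := by
    intro l
    have hswap2 : (∫ lam in (-Real.pi)..Real.pi,
          ∑ k : Fin n, ((x l * x k : ℝ) : ℂ) * te ((l:ℤ) - (k:ℤ)) lam)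
        = ∑ k : Fin n, ∫ lam in (-Real.pi)..Real.pi,
            ((x l * x k : ℝ) : ℂ) * te ((l:ℤ) - (k:ℤ)) lam :=
      intervalIntegral.integral_finset_sum
        (f := fun (k : Fin n) (lam : ℝ) => ((x l * x k : ℝ) : ℂ) * te ((l:ℤ) - (k:ℤ)) lam)
        (fun k _ => (te_intInt _ _ _).const_mul _)
    rw [hswap2]
    have h1 : ∀ k : Fin n,
        (∫ lam in (-Real.pi)..Real.pi, ((x l * x k : ℝ) : ℂ) * te ((l:ℤ) - (k:ℤ)) lam)
        = ((x l * x k : ℝ) : ℂ) * (if ((l:ℤ) - (k:ℤ)) = 0 then (2 * Real.pi : ℂ) else 0) := by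
      intro k
      rw [intervalIntegral.integral_const_mul]
      unfold te
      rw [toeplitz_orth]
    rw [Finset.sum_congr rfl fun k _ => h1 k]
    have hiff : ∀ k : Fin n, ((l:ℤ) - (k:ℤ) = 0) ↔ (k = l) := by
      intro k
      rw [sub_eq_zero]
      constructor
      · intro hh; exact Fin.ext (by exact_mod_cast hh.symm)
      · intro hh; subst hh; rfl
    have hsum : ∀ k : Fin n,
        ((x l * x k : ℝ) : ℂ) * (if ((l:ℤ) - (k:ℤ)) = 0 then (2 * Real.pi : ℂ) else 0)
        = (if k = l then ((x l * x k : ℝ) : ℂ) * (2 * Real.pi : ℂ) else 0) := by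
      intro k
      by_cases hk : k = l
      · subst hk; simp
      · have h0 : ((l:ℤ) - (k:ℤ)) ≠ 0 := fun hc => hk ((hiff k).mp hc)
        simp [h0, hk]
    rw [Finset.sum_congr rfl fun k _ => hsum k, Finset.sum_ite_eq' Finset.univ l]
    simp
  rw [Finset.sum_congr rfl fun l _ => hinner l]
  push_cast
  rw [Finset.mul_sum]
  refine Finset.sum_congr rfl fun l _ => ?_
  push_cast
  ring

private lemma toeplitz_parseval_real (n : ℕ) (x : Fin n → ℝ) :
    (∫ lam in (-Real.pi)..Real.pi, (Complex.normSq (tP n x lam) : ℝ))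
      = 2 * Real.pi * ∑ i, x i ^ 2 := by
  have h1 : (∫ lam in (-Real.pi)..Real.pi, tP n x lam * (starRingEnd ℂ) (tP n x lam))
      = ((∫ lam in (-Real.pi)..Real.pi, (Complex.normSq (tP n x lam) : ℝ) : ℝ) : ℂ) := by
    rw [← intervalIntegral.integral_ofReal]
    exact intervalIntegral.integral_congr fun lam _ => Complex.mul_conj _
  have h2 := toeplitz_parseval n x
  rw [h1] at h2
  exact_mod_cast h2

private lemma h_te_intInt (h : ℝ → ℝ)
    (hInt : IntegrableOn h (Set.Icc (-Real.pi) Real.pi)) (j : ℤ) :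
    IntervalIntegrable (fun lam => ((h lam : ℝ) : ℂ) * te j lam) volume (-Real.pi) Real.pi := by
  have hle : (-Real.pi) ≤ Real.pi := by linarith [Real.pi_pos]
  rw [intervalIntegrable_iff_integrableOn_Ioc_of_le hle]
  have h1 : IntegrableOn (fun lam => ((h lam : ℝ) : ℂ)) (Set.Ioc (-Real.pi) Real.pi) :=
    (hInt.mono_set Set.Ioc_subset_Icc_self).ofReal
  have h2 := Integrable.bdd_mul h1 (te_cont j).aestronglyMeasurable
    (Filter.Eventually.of_forall fun lam => le_of_eq (te_norm j lam))
  exact h2.congr (Filter.Eventually.of_forall fun lam => mul_comm _ _)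

set_option maxHeartbeats 1000000 in
private lemma toeplitz_quad_eq (n : ℕ) (h : ℝ → ℝ)
    (hInt : IntegrableOn h (Set.Icc (-Real.pi) Real.pi)) (x : Fin n → ℝ) :
    x ⬝ᵥ (Matrix.of fun l k : Fin n =>
      (∫ lam in (-Real.pi)..Real.pi,
        ((h lam : ℝ) : ℂ) * Complex.exp (Complex.I * (((l : ℤ) - (k : ℤ) : ℤ) : ℂ) * (lam : ℂ))).re).mulVec x
      = ∫ lam in (-Real.pi)..Real.pi, h lam * Complex.normSq (tP n x lam) := by
  have step1 : x ⬝ᵥ (Matrix.of fun l k : Fin n =>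
      (∫ lam in (-Real.pi)..Real.pi,
        ((h lam : ℝ) : ℂ) * Complex.exp (Complex.I * (((l : ℤ) - (k : ℤ) : ℤ) : ℂ) * (lam : ℂ))).re).mulVec x
      = (∑ l : Fin n, ∑ k : Fin n, ((x l * x k : ℝ) : ℂ) *
          (∫ lam in (-Real.pi)..Real.pi, ((h lam : ℝ) : ℂ) * te ((l:ℤ) - (k:ℤ)) lam)).re := by
    rw [dotProduct]
    simp only [Matrix.mulVec, dotProduct, Matrix.of_apply]
    rw [Complex.re_sum]
    refine Finset.sum_congr rfl fun l _ => ?_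
    rw [Complex.re_sum, Finset.mul_sum]
    refine Finset.sum_congr rfl fun k _ => ?_
    rw [Complex.re_ofReal_mul]
    unfold te
    ring
  rw [step1]
  have step2 : (∑ l : Fin n, ∑ k : Fin n, ((x l * x k : ℝ) : ℂ) *
        (∫ lam in (-Real.pi)..Real.pi, ((h lam : ℝ) : ℂ) * te ((l:ℤ) - (k:ℤ)) lam))
      = ∫ lam in (-Real.pi)..Real.pi,
          ((h lam : ℝ) : ℂ) * (tP n x lam * (starRingEnd ℂ) (tP n x lam)) := by
    have h1 : ∀ l k : Fin n, ((x l * x k : ℝ) : ℂ) *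
          (∫ lam in (-Real.pi)..Real.pi, ((h lam : ℝ) : ℂ) * te ((l:ℤ) - (k:ℤ)) lam)
        = ∫ lam in (-Real.pi)..Real.pi,
            ((x l * x k : ℝ) : ℂ) * (((h lam : ℝ) : ℂ) * te ((l:ℤ) - (k:ℤ)) lam) := by
      intro l k
      rw [intervalIntegral.integral_const_mul]
    rw [Finset.sum_congr rfl fun l _ => Finset.sum_congr rfl fun k _ => h1 l k]
    have h2 : ∀ l : Fin n,
        (∑ k : Fin n, ∫ lam in (-Real.pi)..Real.pi,
          ((x l * x k : ℝ) : ℂ) * (((h lam : ℝ) : ℂ) * te ((l:ℤ) - (k:ℤ)) lam))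
        = ∫ lam in (-Real.pi)..Real.pi,
            ∑ k : Fin n, ((x l * x k : ℝ) : ℂ) * (((h lam : ℝ) : ℂ) * te ((l:ℤ) - (k:ℤ)) lam) :=
      fun l => (intervalIntegral.integral_finset_sum
        (f := fun (k : Fin n) (lam : ℝ) =>
          ((x l * x k : ℝ) : ℂ) * (((h lam : ℝ) : ℂ) * te ((l:ℤ) - (k:ℤ)) lam))
        (fun k _ => (h_te_intInt h hInt _).const_mul _)).symm
    rw [Finset.sum_congr rfl fun l _ => h2 l]
    have h3 : (∑ l : Fin n, ∫ lam in (-Real.pi)..Real.pi,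
          ∑ k : Fin n, ((x l * x k : ℝ) : ℂ) * (((h lam : ℝ) : ℂ) * te ((l:ℤ) - (k:ℤ)) lam))
        = ∫ lam in (-Real.pi)..Real.pi, ∑ l : Fin n,
            ∑ k : Fin n, ((x l * x k : ℝ) : ℂ) * (((h lam : ℝ) : ℂ) * te ((l:ℤ) - (k:ℤ)) lam) :=
      (intervalIntegral.integral_finset_sum
        (f := fun (l : Fin n) (lam : ℝ) =>
          ∑ k : Fin n, ((x l * x k : ℝ) : ℂ) * (((h lam : ℝ) : ℂ) * te ((l:ℤ) - (k:ℤ)) lam))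
        (fun l _ => intInt_sum _ _ _ _ fun k _ => (h_te_intInt h hInt _).const_mul _)).symm
    rw [h3]
    refine intervalIntegral.integral_congr fun lam _ => ?_
    rw [tPP n x lam, Finset.mul_sum]
    refine Finset.sum_congr rfl fun l _ => ?_
    rw [Finset.mul_sum]
    refine Finset.sum_congr rfl fun k _ => ?_
    ring
  rw [step2]
  have step3 : (∫ lam in (-Real.pi)..Real.pi,
      ((h lam : ℝ) : ℂ) * (tP n x lam * (starRingEnd ℂ) (tP n x lam)))
      = ((∫ lam in (-Real.pi)..Real.pi, h lam * Complex.normSq (tP n x lam) : ℝ) : ℂ) := by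
    rw [← intervalIntegral.integral_ofReal]
    refine intervalIntegral.integral_congr fun lam _ => ?_
    rw [Complex.mul_conj]
    push_cast
    ring
  rw [step3, Complex.ofReal_re]

private lemma toeplitz_quad_key (n : ℕ) (h : ℝ → ℝ) (m M : ℝ)
    (hInt : IntegrableOn h (Set.Icc (-Real.pi) Real.pi))
    (hBnd : ∀ᵐ lam ∂(volume.restrict (Set.Icc (-Real.pi) Real.pi)),
      m ≤ 2 * Real.pi * h lam ∧ 2 * Real.pi * h lam ≤ M) (x : Fin n → ℝ) :
    m * (∑ i, x i ^ 2) ≤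
      x ⬝ᵥ (Matrix.of fun l k : Fin n =>
        (∫ lam in (-Real.pi)..Real.pi,
          ((h lam : ℝ) : ℂ) * Complex.exp (Complex.I * (((l : ℤ) - (k : ℤ) : ℤ) : ℂ) * (lam : ℂ))).re).mulVec x ∧
    x ⬝ᵥ (Matrix.of fun l k : Fin n =>
        (∫ lam in (-Real.pi)..Real.pi,
          ((h lam : ℝ) : ℂ) * Complex.exp (Complex.I * (((l : ℤ) - (k : ℤ) : ℤ) : ℂ) * (lam : ℂ))).re).mulVec x ≤
      M * (∑ i, x i ^ 2) := by
  have hpi : (0:ℝ) < Real.pi := Real.pi_pos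
  have hle : (-Real.pi) ≤ Real.pi := by linarith
  rw [toeplitz_quad_eq n h hInt x]
  set g : ℝ → ℝ := fun lam => Complex.normSq (tP n x lam) with hg
  have hg_cont : Continuous g := Complex.continuous_normSq.comp (tP_cont n x)
  have hg_nonneg : ∀ lam, 0 ≤ g lam := fun lam => Complex.normSq_nonneg _
  have hg_int : IntegrableOn g (Set.Ioc (-Real.pi) Real.pi) := hg_cont.integrableOn_Ioc
  have hg_bdd : ∀ lam, ‖g lam‖ ≤ (∑ j, |x j|) ^ 2 := by
    intro lam
    have h1 : ‖tP n x lam‖ ≤ ∑ j, |x j| := by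
      unfold tP
      refine (norm_sum_le _ _).trans (le_of_eq ?_)
      refine Finset.sum_congr rfl fun j _ => ?_
      rw [norm_mul, te_norm, mul_one, Complex.norm_real, Real.norm_eq_abs]
    have h2 : g lam = ‖tP n x lam‖ ^ 2 := by
      rw [hg]; simp [Complex.normSq_eq_norm_sq]
    rw [Real.norm_eq_abs, _root_.abs_of_nonneg (hg_nonneg lam), h2]
    exact pow_le_pow_left₀ (norm_nonneg _) h1 2
  have hIoc : IntegrableOn h (Set.Ioc (-Real.pi) Real.pi) :=
    hInt.mono_set Set.Ioc_subset_Icc_self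
  have hhg_int : IntegrableOn (fun lam => h lam * g lam) (Set.Ioc (-Real.pi) Real.pi) := by
    have := Integrable.bdd_mul hIoc hg_cont.aestronglyMeasurable (Filter.Eventually.of_forall hg_bdd)
    exact this.congr (Filter.Eventually.of_forall fun lam => mul_comm _ _)
  have hBnd' : ∀ᵐ lam ∂(volume.restrict (Set.Ioc (-Real.pi) Real.pi)),
      m ≤ 2 * Real.pi * h lam ∧ 2 * Real.pi * h lam ≤ M :=
    ae_restrict_of_ae_restrict_of_subset Set.Ioc_subset_Icc_self hBnd
  have hQI : (∫ lam in (-Real.pi)..Real.pi, h lam * g lam)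
      = ∫ lam in Set.Ioc (-Real.pi) Real.pi, h lam * g lam := by
    rw [intervalIntegral.integral_of_le hle]
  have hGI : (∫ lam in Set.Ioc (-Real.pi) Real.pi, g lam) = 2 * Real.pi * ∑ i, x i ^ 2 := by
    rw [← intervalIntegral.integral_of_le hle]
    exact toeplitz_parseval_real n x
  constructor
  · have h1 : (∫ lam in Set.Ioc (-Real.pi) Real.pi, m * g lam)
        ≤ ∫ lam in Set.Ioc (-Real.pi) Real.pi, 2 * Real.pi * (h lam * g lam) := by
      refine integral_mono_ae (hg_int.const_mul m) (hhg_int.const_mul _) ?_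
      filter_upwards [hBnd'] with lam hl
      show m * g lam ≤ 2 * Real.pi * (h lam * g lam)
      nlinarith [mul_nonneg (sub_nonneg.mpr hl.1) (hg_nonneg lam)]
    rw [integral_const_mul, integral_const_mul, hGI] at h1
    rw [hQI]
    nlinarith [h1]
  · have h1 : (∫ lam in Set.Ioc (-Real.pi) Real.pi, 2 * Real.pi * (h lam * g lam))
        ≤ ∫ lam in Set.Ioc (-Real.pi) Real.pi, M * g lam := by
      refine integral_mono_ae (hhg_int.const_mul _) (hg_int.const_mul M) ?_
      filter_upwards [hBnd'] with lam hl
      show 2 * Real.pi * (h lam * g lam) ≤ M * g lam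
      nlinarith [mul_nonneg (sub_nonneg.mpr hl.2) (hg_nonneg lam)]
    rw [integral_const_mul, integral_const_mul, hGI] at h1
    rw [hQI]
    nlinarith [h1]

/-- If `m ≤ 2π h(λ) ≤ M` a.e. on `[-π,π]` (h integrable and even), then the
Toeplitz quadratic form satisfies `m‖x‖² ≤ xᵀT_n(h)x ≤ M‖x‖²` for every `x ∈ ℝⁿ`;
in particular all eigenvalues of `T_n(h)` lie in `[m, M]`. -/
theorem toeplitz_quadratic_form_bounds (n : ℕ) (h : ℝ → ℝ) (m M : ℝ) (hmM : m ≤ M)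
    (hInt : IntegrableOn h (Set.Icc (-Real.pi) Real.pi))
    (hEven : ∀ lam : ℝ, h (-lam) = h lam)
    (hBnd : ∀ᵐ lam ∂(volume.restrict (Set.Icc (-Real.pi) Real.pi)),
      m ≤ 2 * Real.pi * h lam ∧ 2 * Real.pi * h lam ≤ M) :
    (∀ x : Fin n → ℝ,
      m * (∑ i, x i ^ 2) ≤
        x ⬝ᵥ (Matrix.of fun l k : Fin n =>
          (∫ lam in (-Real.pi)..Real.pi,
            ((h lam : ℝ) : ℂ) * Complex.exp (Complex.I * (((l : ℤ) - (k : ℤ) : ℤ) : ℂ) * (lam : ℂ))).re).mulVec x ∧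
      x ⬝ᵥ (Matrix.of fun l k : Fin n =>
          (∫ lam in (-Real.pi)..Real.pi,
            ((h lam : ℝ) : ℂ) * Complex.exp (Complex.I * (((l : ℤ) - (k : ℤ) : ℤ) : ℂ) * (lam : ℂ))).re).mulVec x ≤
        M * (∑ i, x i ^ 2)) ∧
    spectrum ℝ (Matrix.of fun l k : Fin n =>
      (∫ lam in (-Real.pi)..Real.pi,
        ((h lam : ℝ) : ℂ) * Complex.exp (Complex.I * (((l : ℤ) - (k : ℤ) : ℤ) : ℂ) * (lam : ℂ))).re)
      ⊆ Set.Icc m M := by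
  refine ⟨fun x => toeplitz_quad_key n h m M hInt hBnd x, ?_⟩
  set A : Matrix (Fin n) (Fin n) ℝ := Matrix.of fun l k : Fin n =>
    (∫ lam in (-Real.pi)..Real.pi,
      ((h lam : ℝ) : ℂ) * Complex.exp (Complex.I * (((l : ℤ) - (k : ℤ) : ℤ) : ℂ) * (lam : ℂ))).re with hA
  intro μ hμ
  have hspec : spectrum ℝ (Matrix.toLinAlgEquiv' A) = spectrum ℝ A :=
    AlgEquiv.spectrum_eq _ _
  have heig : Module.End.HasEigenvalue (Matrix.toLinAlgEquiv' A) μ :=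
    Module.End.hasEigenvalue_iff_mem_spectrum.mpr (by rw [hspec]; exact hμ)
  obtain ⟨v, hv⟩ := heig.exists_hasEigenvector
  have hv1 : A.mulVec v = μ • v := by
    have := hv.apply_eq_smul
    rwa [Matrix.toLinAlgEquiv'_apply] at this
  obtain ⟨i, hi⟩ := Function.ne_iff.mp hv.2
  have hS : 0 < ∑ i, v i ^ 2 := by
    refine Finset.sum_pos' (fun i _ => sq_nonneg _) ⟨i, Finset.mem_univ _, ?_⟩
    have hne : v i ≠ 0 := hi
    positivity
  have hQv : v ⬝ᵥ A.mulVec v = μ * ∑ i, v i ^ 2 := by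
    rw [hv1]
    simp [dotProduct, Finset.mul_sum, sq, mul_comm, mul_assoc, mul_left_comm]
  obtain ⟨hlo, hhi⟩ := toeplitz_quad_key n h m M hInt hBnd v
  rw [← hA] at hlo hhi
  rw [hQv] at hlo hhi
  constructor
  · exact le_of_mul_le_mul_right hlo hS
  · exact le_of_mul_le_mul_right hhi hS
end
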